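/- For z ∈ [0,1] and 0 ≤ a ≤ b ≤ 1 write p_n(z,a,b) := Pr(Z_n ∈ [a,b] | Z₀ = z) for the BEC Bhattacharyya process started at z. Let a, b ∈ (0,1) satisfy √a ≤ 1 − √(1−b), and define sequences u₀ = a, u_{k+1} = 1 − √(1 − u_k), and v₀ = b, v_{k+1} = √(v_k). Then for all integers m, n ≥ 0 and all z ∈ [0,1]: 2^m · p_{n+m}(z, a, b) ≥ p_n(z, u_m, v_m). -/

import Mathlib

open MeasureTheory

/-- The BEC polar maps: `t₁(x) = x²`, `t₀(x) = 2x - x²`. -/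
noncomputable def becT (b : Bool) (x : ℝ) : ℝ := if b then x ^ 2 else 2 * x - x ^ 2

/-- The BEC Bhattacharyya process started at `z`. -/
noncomputable def becZ (z : ℝ) : ℕ → (ℕ → Bool) → ℝ
  | 0, _ => z
  | n + 1, ω => becT (ω n) (becZ z n ω)

/-- `μ` is the i.i.d. Bernoulli(1/2) product measure on `{0,1}^ℕ`,
characterized by its values on cylinder sets. -/
def IsBernoulliHalf (μ : Measure (ℕ → Bool)) : Prop :=
  ∀ (n : ℕ) (b : Fin n → Bool), μ {ω | ∀ i : Fin n, ω i = b i} = (2 : ENNReal)⁻¹ ^ n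

set_option maxHeartbeats 1000000

lemma key_c (c : ℝ) (h0 : 0 ≤ c) (h1 : c ≤ 1) : 1 - Real.sqrt (1 - c^2) ≤ c := by
  have h2 : (1 - c)^2 ≤ 1 - c^2 := by nlinarith
  have : (1 - c) ≤ Real.sqrt (1 - c^2) := by
    calc 1 - c = Real.sqrt ((1-c)^2) := by rw [Real.sqrt_sq (by linarith)]
    _ ≤ _ := Real.sqrt_le_sqrt h2
  linarith

lemma claimA (c : ℝ) (h0 : 0 ≤ c) (h1 : c ≤ 1) :
    Real.sqrt (1 - Real.sqrt (1 - c^2)) ≤ 1 - Real.sqrt (1 - Real.sqrt (1 - (1-c)^2)) := by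
  set P := Real.sqrt (1 - c^2) with hP
  set Q := Real.sqrt (1 - (1-c)^2) with hQ
  have hP0 : 0 ≤ P := Real.sqrt_nonneg _
  have hQ0 : 0 ≤ Q := Real.sqrt_nonneg _
  have hP2 : P^2 = 1 - c^2 := Real.sq_sqrt (by nlinarith)
  have hQ2 : Q^2 = 1 - (1-c)^2 := Real.sq_sqrt (by nlinarith)
  have hP1 : P ≤ 1 := by nlinarith
  have hQ1 : Q ≤ 1 := by nlinarith
  have hPc : 1 - P ≤ c := key_c c h0 h1
  have hQc : 1 - Q ≤ 1 - c := by
    have h := key_c (1-c) (by linarith) (by linarith)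
    linarith
  clear_value P Q
  have hR0 : 0 ≤ Real.sqrt (1 - Q) := Real.sqrt_nonneg _
  have hR2 : (Real.sqrt (1 - Q))^2 = 1 - Q := Real.sq_sqrt (by linarith)
  have hR1 : Real.sqrt (1 - Q) ≤ 1 := by nlinarith [Real.sqrt_nonneg (1 - Q)]
  have hkey : 4 * (1 - Q) ≤ (1 + P - Q)^2 := by nlinarith [mul_nonneg hP0 hQ0]
  have h2R : 2 * Real.sqrt (1 - Q) ≤ 1 + P - Q := by
    have h1 : (2 * Real.sqrt (1 - Q))^2 ≤ (1 + P - Q)^2 := by nlinarith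
    exact (pow_le_pow_iff_left₀ (by nlinarith) (by linarith) two_ne_zero).mp h1
  rw [show (1:ℝ) - Real.sqrt (1 - Q) = Real.sqrt ((1 - Real.sqrt (1 - Q))^2) from
    (Real.sqrt_sq (by linarith)).symm]
  apply Real.sqrt_le_sqrt
  nlinarith

lemma inv_step (u v : ℝ) (hu0 : 0 ≤ u) (hu1 : u ≤ 1) (hv0 : 0 ≤ v) (hv1 : v ≤ 1)
    (h : Real.sqrt u ≤ 1 - Real.sqrt (1 - v)) :
    Real.sqrt (1 - Real.sqrt (1 - u)) ≤ 1 - Real.sqrt (1 - Real.sqrt v) := by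
  set s := Real.sqrt u with hs
  set β := 1 - Real.sqrt (1 - v) with hβ
  have hs0 : 0 ≤ s := Real.sqrt_nonneg _
  have hs2 : s^2 = u := Real.sq_sqrt hu0
  have hβ1 : β ≤ 1 := by have := Real.sqrt_nonneg (1-v); rw [hβ]; linarith
  have hβ0 : 0 ≤ β := le_trans hs0 h
  have hvβ : (1-β)^2 = 1 - v := by
    have h1 : 1 - β = Real.sqrt (1-v) := by rw [hβ]; ring
    rw [h1]; exact Real.sq_sqrt (by linarith)
  have h1 : Real.sqrt (1 - u) = Real.sqrt (1 - s^2) := by rw [hs2]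
  have h2 : Real.sqrt v = Real.sqrt (1 - (1-β)^2) := by rw [hvβ]; ring_nf
  rw [h1, h2]
  have mono : Real.sqrt (1 - Real.sqrt (1 - s^2)) ≤ Real.sqrt (1 - Real.sqrt (1 - β^2)) := by
    apply Real.sqrt_le_sqrt
    have : Real.sqrt (1 - β^2) ≤ Real.sqrt (1 - s^2) := Real.sqrt_le_sqrt (by nlinarith)
    linarith
  exact mono.trans (claimA β hβ0 hβ1)

lemma becT_mem (b : Bool) (x : ℝ) (h : x ∈ Set.Icc (0:ℝ) 1) : becT b x ∈ Set.Icc (0:ℝ) 1 := by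
  obtain ⟨h0, h1⟩ := h
  cases b <;> simp only [becT, if_true, if_false, Bool.false_eq_true] <;>
    constructor <;> nlinarith

lemma dicho (u v x : ℝ) (hu0 : 0 ≤ u) (hu1 : u ≤ 1) (hv0 : 0 ≤ v) (hv1 : v ≤ 1)
    (hsq : Real.sqrt u ≤ 1 - Real.sqrt (1 - v)) (hx0 : 0 ≤ x) (hx1 : x ≤ 1)
    (hxl : 1 - Real.sqrt (1 - u) ≤ x) (hxr : x ≤ Real.sqrt v) :
    (u ≤ 2*x - x^2 ∧ 2*x - x^2 ≤ v) ∨ (u ≤ x^2 ∧ x^2 ≤ v) := by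
  by_cases h : x ≤ 1 - Real.sqrt (1 - v)
  · left
    have h1x : Real.sqrt (1-v) ≤ 1 - x := by linarith
    have hsv0 : 0 ≤ Real.sqrt (1-v) := Real.sqrt_nonneg _
    have hsv2 : Real.sqrt (1-v)^2 = 1 - v := Real.sq_sqrt (by linarith)
    have hub : 1 - v ≤ (1-x)^2 := by nlinarith
    have hsu2 : Real.sqrt (1-u)^2 = 1-u := Real.sq_sqrt (by linarith)
    have h1x' : 1 - x ≤ Real.sqrt (1-u) := by linarith
    have hlb : (1-x)^2 ≤ 1 - u := by nlinarith [Real.sqrt_nonneg (1-u)]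
    constructor <;> nlinarith
  · right
    push_neg at h
    have hsu : Real.sqrt u ≤ x := le_trans hsq h.le
    have hsu2 : Real.sqrt u ^2 = u := Real.sq_sqrt hu0
    have hsv2 : Real.sqrt v ^2 = v := Real.sq_sqrt hv0
    constructor
    · nlinarith [Real.sqrt_nonneg u]
    · nlinarith [Real.sqrt_nonneg v]

noncomputable def becZfin (z : ℝ) : (n : ℕ) → (Fin n → Bool) → ℝ
  | 0, _ => z
  | n+1, c => becT (c (Fin.last n)) (becZfin z n (fun i => c i.castSucc))

lemma becZ_eq_fin (z : ℝ) (n : ℕ) (ω : ℕ → Bool) :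
    becZ z n ω = becZfin z n (fun i => ω i) := by
  induction n with
  | zero => rfl
  | succ n ih =>
    show becT (ω n) (becZ z n ω) = becT _ _
    rw [ih]
    simp [becZfin, Fin.val_last, Fin.coe_castSucc]

lemma becZfin_snoc (z : ℝ) (n : ℕ) (c : Fin n → Bool) (b : Bool) :
    becZfin z (n+1) (Fin.snoc c b) = becT b (becZfin z n c) := by
  simp [becZfin]

lemma becZfin_mem (z : ℝ) (hz : z ∈ Set.Icc (0:ℝ) 1) (n : ℕ) (c : Fin n → Bool) :
    becZfin z n c ∈ Set.Icc (0:ℝ) 1 := by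
  induction n with
  | zero => exact hz
  | succ n ih => exact becT_mem _ _ (ih _)

lemma cyl_measurable (n : ℕ) (c : Fin n → Bool) :
    MeasurableSet {ω : ℕ → Bool | ∀ i : Fin n, ω i = c i} := by
  have : {ω : ℕ → Bool | ∀ i : Fin n, ω i = c i}
      = ⋂ i : Fin n, (fun ω : ℕ → Bool => ω i) ⁻¹' {c i} := by
    ext ω; simp [Set.mem_iInter]
  rw [this]
  exact MeasurableSet.iInter fun i =>
    (measurable_pi_apply (i : ℕ)) (measurableSet_singleton (c i))

lemma measure_event (μ : Measure (ℕ → Bool)) (hμ : IsBernoulliHalf μ) (z : ℝ) (n : ℕ)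
    (S : Set ℝ) [DecidablePred fun c : Fin n → Bool => becZfin z n c ∈ S] :
    μ {ω | becZ z n ω ∈ S} =
      (Finset.univ.filter fun c : Fin n → Bool => becZfin z n c ∈ S).card
        * (2 : ENNReal)⁻¹ ^ n := by
  classical
  have hset : {ω | becZ z n ω ∈ S} =
      ⋃ c ∈ (Finset.univ.filter fun c : Fin n → Bool => becZfin z n c ∈ S),
        {ω : ℕ → Bool | ∀ i : Fin n, ω i = c i} := by
    ext ω
    simp only [Set.mem_iUnion, Finset.mem_filter, Finset.mem_univ, true_and,
      Set.mem_setOf_eq, exists_prop]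
    constructor
    · intro h
      refine ⟨fun i => ω i, ?_, fun i => rfl⟩
      rwa [becZ_eq_fin] at h
    · rintro ⟨c, hc, hwc⟩
      rw [becZ_eq_fin]
      have : (fun i : Fin n => ω i) = c := funext hwc
      rwa [this]
  rw [hset, measure_biUnion_finset ?_ (fun c _ => cyl_measurable n c)]
  · rw [Finset.sum_congr rfl (fun c _ => hμ n c), Finset.sum_const, nsmul_eq_mul]
  · intro c hc c' hc' hne
    simp only [Function.onFun]
    refine Set.disjoint_left.mpr fun ω hω hω' => hne ?_
    funext i
    rw [← hω i, ← hω' i]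

lemma count_le (z : ℝ) (hz : z ∈ Set.Icc (0:ℝ) 1) (n : ℕ) (u' v' uu vv : ℝ)
    (huu0 : 0 ≤ uu) (huu1 : uu ≤ 1) (hvv0 : 0 ≤ vv) (hvv1 : vv ≤ 1)
    (hsq : Real.sqrt uu ≤ 1 - Real.sqrt (1 - vv))
    (hu' : u' = 1 - Real.sqrt (1 - uu)) (hv' : v' = Real.sqrt vv) :
    (Finset.univ.filter fun c : Fin n → Bool => becZfin z n c ∈ Set.Icc u' v').card ≤
      (Finset.univ.filter fun c : Fin (n+1) → Bool =>
        becZfin z (n+1) c ∈ Set.Icc uu vv).card := by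
  classical
  apply Finset.card_le_card_of_injOn
    (fun c : Fin n → Bool => (Fin.snoc c
      (if uu ≤ (becZfin z n c)^2 ∧ (becZfin z n c)^2 ≤ vv then true else false) :
        Fin (n+1) → Bool))
  · intro c hc
    simp only [Finset.mem_coe, Finset.mem_filter, Finset.mem_univ, true_and, Set.mem_Icc] at hc ⊢
    obtain ⟨hl, hr⟩ := hc
    obtain ⟨hx0, hx1⟩ := becZfin_mem z hz n c
    rw [becZfin_snoc]
    rcases dicho uu vv (becZfin z n c) huu0 huu1 hvv0 hvv1 hsq hx0 hx1
      (by rw [← hu']; exact hl) (by rw [← hv']; exact hr) with h | h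
    · by_cases hcond : uu ≤ (becZfin z n c)^2 ∧ (becZfin z n c)^2 ≤ vv
      · rw [if_pos hcond]; simpa [becT] using hcond
      · rw [if_neg hcond]; simpa [becT] using h
    · rw [if_pos h]; simpa [becT] using h
  · intro c hc c' hc' h
    funext i
    have h2 := congrFun h i.castSucc
    simpa using h2

lemma step_measure (μ : Measure (ℕ → Bool)) (hμ : IsBernoulliHalf μ)
    (z : ℝ) (hz : z ∈ Set.Icc (0:ℝ) 1) (n : ℕ) (u' v' uu vv : ℝ)
    (huu0 : 0 ≤ uu) (huu1 : uu ≤ 1) (hvv0 : 0 ≤ vv) (hvv1 : vv ≤ 1)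
    (hsq : Real.sqrt uu ≤ 1 - Real.sqrt (1 - vv))
    (hu' : u' = 1 - Real.sqrt (1 - uu)) (hv' : v' = Real.sqrt vv) :
    μ {ω | becZ z n ω ∈ Set.Icc u' v'} ≤ 2 * μ {ω | becZ z (n+1) ω ∈ Set.Icc uu vv} := by
  rw [measure_event μ hμ, measure_event μ hμ]
  have hc := count_le z hz n u' v' uu vv huu0 huu1 hvv0 hvv1 hsq hu' hv'
  have h2 : (2:ENNReal) * 2⁻¹ = 1 := ENNReal.mul_inv_cancel (by norm_num) (by norm_num)
  refine le_trans (mul_le_mul_left (Nat.cast_le.mpr hc) ((2:ENNReal)⁻¹ ^ n)) (le_of_eq ?_)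
  rw [pow_succ]
  calc ((Finset.univ.filter fun c : Fin (n+1) → Bool =>
        becZfin z (n+1) c ∈ Set.Icc uu vv).card : ENNReal) * 2⁻¹ ^ n
      = (2 * 2⁻¹) * ((Finset.univ.filter fun c : Fin (n+1) → Bool =>
        becZfin z (n+1) c ∈ Set.Icc uu vv).card * 2⁻¹ ^ n) := by rw [h2, one_mul]
  _ = 2 * ((Finset.univ.filter fun c : Fin (n+1) → Bool =>
        becZfin z (n+1) c ∈ Set.Icc uu vv).card * (2⁻¹ ^ n * 2⁻¹)) := by ring

theorem stmt15 (μ : Measure (ℕ → Bool)) [IsProbabilityMeasure μ] (hμ : IsBernoulliHalf μ)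
    (a b : ℝ) (ha : a ∈ Set.Ioo (0:ℝ) 1) (hb : b ∈ Set.Ioo (0:ℝ) 1)
    (hab : Real.sqrt a ≤ 1 - Real.sqrt (1 - b))
    (u v : ℕ → ℝ) (hu0 : u 0 = a) (hurec : ∀ k, u (k + 1) = 1 - Real.sqrt (1 - u k))
    (hv0 : v 0 = b) (hvrec : ∀ k, v (k + 1) = Real.sqrt (v k)) :
    ∀ (m n : ℕ), ∀ z ∈ Set.Icc (0:ℝ) 1,
      (μ {ω | becZ z n ω ∈ Set.Icc (u m) (v m)}).toReal ≤
        (2:ℝ) ^ m * (μ {ω | becZ z (n + m) ω ∈ Set.Icc a b}).toReal := by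
  have hinv : ∀ m, 0 ≤ u m ∧ u m ≤ 1 ∧ 0 ≤ v m ∧ v m ≤ 1 ∧
      Real.sqrt (u m) ≤ 1 - Real.sqrt (1 - v m) := by
    intro m
    induction m with
    | zero => rw [hu0, hv0]; exact ⟨ha.1.le, ha.2.le, hb.1.le, hb.2.le, hab⟩
    | succ m ih =>
      obtain ⟨h1, h2, h3, h4, h5⟩ := ih
      refine ⟨?_, ?_, ?_, ?_, ?_⟩
      · rw [hurec]
        have := Real.sqrt_le_one.mpr (show (1:ℝ) - u m ≤ 1 by linarith)
        linarith
      · rw [hurec]; have := Real.sqrt_nonneg (1 - u m); linarith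
      · rw [hvrec]; exact Real.sqrt_nonneg _
      · rw [hvrec]; exact Real.sqrt_le_one.mpr h4
      · rw [hurec, hvrec]; exact inv_step (u m) (v m) h1 h2 h3 h4 h5
  have main : ∀ m n, ∀ z ∈ Set.Icc (0:ℝ) 1,
      μ {ω | becZ z n ω ∈ Set.Icc (u m) (v m)} ≤
        2 ^ m * μ {ω | becZ z (n + m) ω ∈ Set.Icc a b} := by
    intro m
    induction m with
    | zero =>
      intro n z hz
      simp [hu0, hv0]
    | succ m ih =>
      intro n z hz
      obtain ⟨h1, h2, h3, h4, h5⟩ := hinv m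
      have hstep : μ {ω | becZ z n ω ∈ Set.Icc (u (m+1)) (v (m+1))} ≤
          2 * μ {ω | becZ z (n+1) ω ∈ Set.Icc (u m) (v m)} :=
        step_measure μ hμ z hz n (u (m+1)) (v (m+1)) (u m) (v m)
          h1 h2 h3 h4 h5 (hurec m) (hvrec m)
      have hih := ih (n+1) z hz
      calc μ {ω | becZ z n ω ∈ Set.Icc (u (m+1)) (v (m+1))}
          ≤ 2 * μ {ω | becZ z (n+1) ω ∈ Set.Icc (u m) (v m)} := hstep
      _ ≤ 2 * (2 ^ m * μ {ω | becZ z (n+1+m) ω ∈ Set.Icc a b}) := mul_le_mul_right hih 2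
      _ = 2 ^ (m+1) * μ {ω | becZ z (n+(m+1)) ω ∈ Set.Icc a b} := by
          have hn : n + 1 + m = n + (m + 1) := by omega
          rw [hn]; ring
  intro m n z hz
  have h := main m n z hz
  have hfin : (2:ENNReal) ^ m * μ {ω | becZ z (n + m) ω ∈ Set.Icc a b} ≠ ⊤ :=
    ENNReal.mul_ne_top (ENNReal.pow_ne_top (by norm_num)) (measure_ne_top μ _)
  calc (μ {ω | becZ z n ω ∈ Set.Icc (u m) (v m)}).toReal
      ≤ ((2:ENNReal) ^ m * μ {ω | becZ z (n + m) ω ∈ Set.Icc a b}).toReal :=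
        ENNReal.toReal_mono hfin h
  _ = (2:ℝ) ^ m * (μ {ω | becZ z (n + m) ω ∈ Set.Icc a b}).toReal := by
        rw [ENNReal.toReal_mul, ENNReal.toReal_pow, ENNReal.toReal_ofNat]
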